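/- In the typed mean-field model, if the noises {W^i_t} are independent across subsystems with distribution depending only on the type θ^i, and all subsystems of the same type use the identical prescription, then the typed mean field Z_t is a controlled Markov process with control γ̃_t = (γ_t(1),...,γ_t(k)): P(Z_{t+1} = z | Z_{1:t} = z_{1:t}, γ̃_{1:t}) = P(Z_{t+1} = z | Z_t = z_t, γ̃_t). -/

import Mathlib

open scoped ENNReal

noncomputable section

/-- Empirical distribution (mean field) of a tuple of `n` points in a finite set `X`. -/
def emp {X : Type*} [Fintype X] [DecidableEq X] {n : ℕ} (x : Fin n → X) : X → ℝ :=
  fun a => ((Finset.univ.filter fun i => x i = a).card : ℝ) / n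

variable {k : ℕ} {W : Type*}

/-- The typed mean field: the empirical distribution, on the augmented state space
`Σ θ, X(θ)`, of the augmented states `(θⁱ, xⁱ)`. -/
def empT {n : ℕ} (Xs : Fin k → Type*) [∀ j, Fintype (Xs j)] [∀ j, DecidableEq (Xs j)]
    (θ : Fin n → Fin k) (x : (i : Fin n) → Xs (θ i)) : ((j : Fin k) × Xs j) → ℝ :=
  emp (fun i => (⟨θ i, x i⟩ : (j : Fin k) × Xs j))

/-- Closed-loop state process of the typed mean-field system on the canonical sample
space (initial states and noises): `Xⁱ_{t+1} = f(θⁱ, Z_t, Xⁱ_t, γ_t(θⁱ)(Xⁱ_t), Wⁱ_t)`,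
where the type-indexed prescription `γ_t = ψ_t(Z_{0:t})` is a function of the typed
mean-field history. -/
def tState {n T : ℕ} (Xs Us : Fin k → Type*)
    [∀ j, Fintype (Xs j)] [∀ j, DecidableEq (Xs j)] [Inhabited W]
    (θ : Fin n → Fin k)
    (f : (j : Fin k) → (((j : Fin k) × Xs j) → ℝ) → Xs j → Us j → W → Xs j)
    (ψ : (t : ℕ) → (Fin (t + 1) → (((j : Fin k) × Xs j) → ℝ)) →
      ((j : Fin k) → Xs j → Us j))
    (ω : ((i : Fin n) → Xs (θ i)) × (Fin T → Fin n → W)) :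
    (t : ℕ) → (i : Fin n) → Xs (θ i)
  | 0 => ω.1
  | t + 1 => fun i =>
      f (θ i) (empT Xs θ (tState Xs Us θ f ψ ω t)) (tState Xs Us θ f ψ ω t i)
        (ψ t (fun s : Fin (t + 1) => empT Xs θ (tState Xs Us θ f ψ ω s)) (θ i)
          (tState Xs Us θ f ψ ω t i))
        (if h : t < T then ω.2 ⟨t, h⟩ i else default)
  termination_by t => t
  decreasing_by all_goals first | exact s.isLt | omega

open List in
open Finset in
/-- Two tuples with the same counts are related by a permutation. -/
theorem exists_perm_comp_eq {α : Type*} [DecidableEq α] [Fintype α] {m : ℕ} (p q : Fin m → α)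
    (h : ∀ a, (univ.filter fun i => p i = a).card = (univ.filter fun i => q i = a).card) :
    ∃ σ : Equiv.Perm (Fin m), p ∘ σ = q := by
  classical
  letI : LinearOrder α := LinearOrder.lift' (Fintype.equivFin α) (Fintype.equivFin α).injective
  have hperm : List.Perm (List.ofFn p) (List.ofFn q) := by
    rw [← Multiset.coe_eq_coe, ← Fin.univ_val_map, ← Fin.univ_val_map]
    refine Multiset.ext.2 fun a => ?_
    rw [Multiset.count_map, Multiset.count_map]
    have : ∀ r : Fin m → α,
        Multiset.card (Finset.univ.val.filter fun i => a = r i)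
          = (univ.filter fun i => r i = a).card := by
      intro r
      simp only [eq_comm (a := a)]
      rfl
    rw [this p, this q, h]
  have hs : p ∘ Tuple.sort p = q ∘ Tuple.sort q := by
    refine List.ofFn_injective (List.Perm.eq_of_sortedLE (List.sortedLE_ofFn_iff.2 (Tuple.monotone_sort p))
      (List.sortedLE_ofFn_iff.2 (Tuple.monotone_sort q)) ?_)
    calc List.ofFn (p ∘ Tuple.sort p) ~ List.ofFn p := (Tuple.sort p).ofFn_comp_perm p
      _ ~ List.ofFn q := hperm
      _ ~ List.ofFn (q ∘ Tuple.sort q) := ((Tuple.sort q).ofFn_comp_perm q).symm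
  refine ⟨(Tuple.sort q).symm.trans (Tuple.sort p), funext fun i => ?_⟩
  have := congrFun hs ((Tuple.sort q).symm i)
  simpa using this

theorem card_filter_comp_perm {X : Type*} [DecidableEq X] {m : ℕ} (x : Fin m → X)
    (σ : Equiv.Perm (Fin m)) (a : X) :
    (Finset.univ.filter fun i => x (σ i) = a).card
      = (Finset.univ.filter fun i => x i = a).card :=
  Finset.card_equiv σ (by simp)

theorem emp_comp_perm {X : Type*} [Fintype X] [DecidableEq X] {m : ℕ} (x : Fin m → X)
    (σ : Equiv.Perm (Fin m)) : emp (fun i => x (σ i)) = emp x := by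
  funext a
  simp only [emp, card_filter_comp_perm]

theorem count_eq_of_emp_eq {X : Type*} [Fintype X] [DecidableEq X] {m : ℕ} (hm : 1 ≤ m)
    {x y : Fin m → X} (h : emp x = emp y) (a : X) :
    (Finset.univ.filter fun i => x i = a).card
      = (Finset.univ.filter fun i => y i = a).card := by
  have := congrFun h a
  simp only [emp] at this
  have hm' : (m : ℝ) ≠ 0 := by positivity
  field_simp at this
  exact_mod_cast this

theorem noise_exchange {n : ℕ} (hn : 1 ≤ n) (Xs : Fin k → Type*)
    [∀ j, Fintype (Xs j)] [∀ j, DecidableEq (Xs j)] [Fintype W]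
    (θ : Fin n → Fin k) (ν : Fin k → W → ℝ≥0∞)
    (g : (j : Fin k) → Xs j → W → Xs j) (znext : ((j : Fin k) × Xs j) → ℝ)
    {x x' : (i : Fin n) → Xs (θ i)} (hxx : empT Xs θ x = empT Xs θ x') :
    (∑ v : Fin n → W, if empT Xs θ (fun i => g (θ i) (x i) (v i)) = znext
        then ∏ i, ν (θ i) (v i) else 0)
      = ∑ v : Fin n → W, if empT Xs θ (fun i => g (θ i) (x' i) (v i)) = znext
        then ∏ i, ν (θ i) (v i) else 0 := by
  classical
  obtain ⟨σ, hσ⟩ := exists_perm_comp_eq (fun i => (⟨θ i, x i⟩ : (j : Fin k) × Xs j))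
    (fun i => (⟨θ i, x' i⟩ : (j : Fin k) × Xs j))
    (count_eq_of_emp_eq hn hxx)
  have hσ' : ∀ i, (⟨θ (σ i), x (σ i)⟩ : (j : Fin k) × Xs j) = ⟨θ i, x' i⟩ :=
    fun i => congrFun hσ i
  have hθ : ∀ i, θ (σ i) = θ i := fun i => congrArg Sigma.fst (hσ' i)
  -- pointwise sigma congruence for g
  have hg : ∀ i w, (⟨θ i, g (θ i) (x' i) w⟩ : (j : Fin k) × Xs j)
      = ⟨θ (σ i), g (θ (σ i)) (x (σ i)) w⟩ := by
    intro i w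
    exact (congrArg (fun s : (j : Fin k) × Xs j => (⟨s.1, g s.1 s.2 w⟩ : (j : Fin k) × Xs j))
      (hσ' i)).symm
  have hν : ∀ i w, ν (θ (σ i)) w = ν (θ i) w := fun i w => by rw [hθ]
  let e : (Fin n → W) ≃ (Fin n → W) := Equiv.arrowCongr σ.symm (Equiv.refl W)
  have he : ∀ (v : Fin n → W) i, e v i = v (σ i) := fun v i => by
    simp [e, Equiv.arrowCongr]
  rw [← Equiv.sum_comp e (fun v : Fin n → W =>
    if empT Xs θ (fun i => g (θ i) (x' i) (v i)) = znext then ∏ i, ν (θ i) (v i) else 0)]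
  refine Finset.sum_congr rfl fun v _ => ?_
  have hcond : empT Xs θ (fun i => g (θ i) (x' i) (e v i))
      = empT Xs θ (fun i => g (θ i) (x i) (v i)) := by
    have hQP : (fun i => (⟨θ i, g (θ i) (x' i) (e v i)⟩ : (j : Fin k) × Xs j))
        = fun i => (⟨θ (σ i), g (θ (σ i)) (x (σ i)) (v (σ i))⟩ : (j : Fin k) × Xs j) := by
      funext i
      rw [he]
      exact hg i (v (σ i))
    unfold empT
    rw [hQP]
    exact emp_comp_perm (fun i => (⟨θ i, g (θ i) (x i) (v i)⟩ : (j : Fin k) × Xs j)) σ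
  have hprod : (∏ i, ν (θ i) (e v i)) = ∏ i, ν (θ i) (v i) := by
    rw [← Equiv.prod_comp σ (fun i => ν (θ i) (v i))]
    refine Finset.prod_congr rfl fun i _ => ?_
    rw [he]
    exact (hν i (v (σ i))).symm
  rw [hcond, hprod]

theorem tState_congr {n T : ℕ} (Xs Us : Fin k → Type*)
    [∀ j, Fintype (Xs j)] [∀ j, DecidableEq (Xs j)] [Inhabited W]
    (θ : Fin n → Fin k)
    (f : (j : Fin k) → (((j : Fin k) × Xs j) → ℝ) → Xs j → Us j → W → Xs j)
    (ψ : (t : ℕ) → (Fin (t + 1) → (((j : Fin k) × Xs j) → ℝ)) →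
      ((j : Fin k) → Xs j → Us j))
    (ω ω' : ((i : Fin n) → Xs (θ i)) × (Fin T → Fin n → W)) (h1 : ω.1 = ω'.1) :
    ∀ s : ℕ, (∀ r : Fin T, (r : ℕ) < s → ω.2 r = ω'.2 r) →
      tState Xs Us θ f ψ ω s = tState Xs Us θ f ψ ω' s := by
  intro s
  induction s using Nat.strong_induction_on with
  | _ s IH =>
    intro h2
    match s with
    | 0 => simpa only [tState] using h1
    | Nat.succ s =>
      have hs : tState Xs Us θ f ψ ω s = tState Xs Us θ f ψ ω' s :=
        IH s (by omega) (fun r hr => h2 r (by omega))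
      have hh : (fun r : Fin (s+1) => empT Xs θ (tState Xs Us θ f ψ ω (r : ℕ)))
          = fun r : Fin (s+1) => empT Xs θ (tState Xs Us θ f ψ ω' (r : ℕ)) :=
        funext fun r => by
          rw [IH (r : ℕ) r.isLt (fun r' hr' => h2 r' (by have := r.isLt; omega))]
      have hw : ∀ i, (if h : s < T then ω.2 ⟨s, h⟩ i else default)
          = (if h : s < T then ω'.2 ⟨s, h⟩ i else default) := by
        intro i; by_cases h : s < T
        · simp only [dif_pos h]; rw [h2 ⟨s, h⟩ (by simp)]
        · simp [h]
      simp only [tState]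
      funext i
      rw [hs, hh, hw i]

def noiseProb {n : ℕ} [Fintype W] (Xs : Fin k → Type*)
    [∀ j, Fintype (Xs j)] [∀ j, DecidableEq (Xs j)]
    (θ : Fin n → Fin k) (ν : Fin k → W → ℝ≥0∞)
    (g : (j : Fin k) → Xs j → W → Xs j) (znext : ((j : Fin k) × Xs j) → ℝ)
    (x : (i : Fin n) → Xs (θ i)) : ℝ≥0∞ :=
  ∑ v : Fin n → W, if empT Xs θ (fun i => g (θ i) (x i) (v i)) = znext
    then ∏ i, ν (θ i) (v i) else 0

theorem key_factor {n T : ℕ} (hn : 1 ≤ n) (Xs Us : Fin k → Type*)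
    [∀ j, Fintype (Xs j)] [∀ j, DecidableEq (Xs j)]
    [Fintype W] [DecidableEq W] [Inhabited W]
    (θ : Fin n → Fin k)
    (f : (j : Fin k) → (((j : Fin k) × Xs j) → ℝ) → Xs j → Us j → W → Xs j)
    (ψ : (t : ℕ) → (Fin (t + 1) → (((j : Fin k) × Xs j) → ℝ)) →
      ((j : Fin k) → Xs j → Us j))
    (ρ : (j : Fin k) → Xs j → ℝ≥0∞) (ν : Fin k → W → ℝ≥0∞)
    (hν : ∀ j, ∑ w : W, ν j w = 1)
    (mass : (((i : Fin n) → Xs (θ i)) × (Fin T → Fin n → W)) → ℝ≥0∞)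
    (hmass : ∀ ω, mass ω =
      (∏ i, ρ (θ i) (ω.1 i)) * ∏ t, ∏ i, ν (θ i) (ω.2 t i))
    (t : ℕ) (ht : t < T)
    (zlast : ((j : Fin k) × Xs j) → ℝ) (γlast : (j : Fin k) → Xs j → Us j)
    (znext : ((j : Fin k) × Xs j) → ℝ)
    (P : (Fin (t + 1) → (((j : Fin k) × Xs j) → ℝ)) → Prop)
    (D C : Finset (((i : Fin n) → Xs (θ i)) × (Fin T → Fin n → W)))
    (hD : ∀ ω, ω ∈ D ↔
      P (fun s : Fin (t + 1) => empT Xs θ (tState Xs Us θ f ψ ω (s : ℕ))))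
    (hP : ∀ h, P h → h (Fin.last t) = zlast ∧ ψ t h = γlast)
    (hC : ∀ ω, ω ∈ C ↔ empT Xs θ (tState Xs Us θ f ψ ω (t + 1)) = znext)
    (x₀ : (i : Fin n) → Xs (θ i)) (hx₀ : empT Xs θ x₀ = zlast) :
    ∑ ω ∈ D ∩ C, mass ω = (∑ ω ∈ D, mass ω) *
      noiseProb Xs θ ν (fun j y w => f j zlast y (γlast j y)  w) znext x₀ := by
  classical
  set tT : Fin T := ⟨t, ht⟩ with htT
  set Ω₀ := ((i : Fin n) → Xs (θ i)) × ({s : Fin T // s ≠ tT} → Fin n → W) with hΩ₀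
  set rec : Ω₀ → (Fin n → W) → (((i : Fin n) → Xs (θ i)) × (Fin T → Fin n → W)) :=
    fun p v => (p.1, fun s => if h : s = tT then v else p.2 ⟨s, h⟩) with hrec
  -- the equivalence
  let E : (((i : Fin n) → Xs (θ i)) × (Fin T → Fin n → W)) ≃ (Ω₀ × (Fin n → W)) :=
    { toFun := fun ω => ((ω.1, fun s => ω.2 s.1), ω.2 tT)
      invFun := fun q => rec q.1 q.2
      left_inv := by
        intro ω
        refine Prod.ext rfl ?_
        funext s
        by_cases h : s = tT
        · subst h; simp [hrec]
        · simp [hrec, h]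
      right_inv := by
        intro q
        refine Prod.ext (Prod.ext rfl ?_) ?_
        · funext s
          simp [hrec, s.2]
        · simp [hrec] }
  have hsum : ∀ G : (((i : Fin n) → Xs (θ i)) × (Fin T → Fin n → W)) → ℝ≥0∞,
      ∑ ω, G ω = ∑ p : Ω₀, ∑ v : Fin n → W, G (rec p v) := by
    intro G
    rw [← Equiv.sum_comp E.symm G, Fintype.sum_prod_type]
    rfl
  -- state agreement up to time t
  have hstate : ∀ (p : Ω₀) (v v' : Fin n → W) (s : ℕ), s ≤ t →
      tState Xs Us θ f ψ (rec p v) s = tState Xs Us θ f ψ (rec p v') s := by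
    intro p v v' s hs
    refine tState_congr Xs Us θ f ψ (rec p v) (rec p v') rfl s ?_
    intro r hr
    have hrt : r ≠ tT := by
      intro h
      rw [h] at hr
      simp only [htT] at hr
      omega
    simp [hrec, hrt]
  set v₀ : Fin n → W := fun _ => default with hv₀
  set xp : Ω₀ → ((i : Fin n) → Xs (θ i)) := fun p => tState Xs Us θ f ψ (rec p v₀) t with hxp
  have hhist : ∀ (p : Ω₀) (v : Fin n → W),
      (fun s : Fin (t + 1) => empT Xs θ (tState Xs Us θ f ψ (rec p v) (s : ℕ)))
        = fun s : Fin (t + 1) => empT Xs θ (tState Xs Us θ f ψ (rec p v₀) (s : ℕ)) := by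
    intro p v
    funext s
    rw [hstate p v v₀ (s : ℕ) (by omega)]
  have hmem : ∀ (p : Ω₀) (v : Fin n → W), (rec p v ∈ D ↔ rec p v₀ ∈ D) := by
    intro p v
    rw [hD, hD, hhist]
  -- mass factorization
  set M : Ω₀ → ℝ≥0∞ := fun p => (∏ i, ρ (θ i) (p.1 i)) *
    ∏ s : {s : Fin T // s ≠ tT}, ∏ i, ν (θ i) (p.2 s i) with hM
  have hmassfac : ∀ (p : Ω₀) (v : Fin n → W),
      mass (rec p v) = M p * ∏ i, ν (θ i) (v i) := by
    intro p v
    rw [hmass]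
    have h1 : (∏ s : Fin T, ∏ i, ν (θ i) ((rec p v).2 s i))
        = (∏ i, ν (θ i) (v i)) * ∏ s : {s : Fin T // s ≠ tT}, ∏ i, ν (θ i) (p.2 s i) := by
      rw [Fintype.prod_eq_mul_prod_compl tT]
      congr 1
      · simp [hrec]
      · rw [Finset.prod_subtype (p := fun s => s ≠ tT) ({tT}ᶜ : Finset (Fin T))
          (fun s => by simp) (fun s => ∏ i, ν (θ i) ((rec p v).2 s i))]
        refine Finset.prod_congr rfl fun s _ => Finset.prod_congr rfl fun i _ => ?_
        simp [hrec, s.2]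
    rw [h1, hM]
    ring
  -- the next state
  have hnext : ∀ (p : Ω₀) (v : Fin n → W),
      tState Xs Us θ f ψ (rec p v) (t + 1) = fun i =>
        f (θ i) (empT Xs θ (xp p)) (xp p i)
          (ψ t (fun s : Fin (t + 1) => empT Xs θ (tState Xs Us θ f ψ (rec p v₀) (s : ℕ)))
            (θ i) (xp p i)) (v i) := by
    intro p v
    simp only [tState]
    funext i
    rw [hstate p v v₀ t le_rfl, hhist p v]
    simp only [hxp]
    congr 1
    rw [dif_pos ht]
    simp [hrec, htT]
  -- rewrite both sums
  have hDC : ∑ ω ∈ D ∩ C, mass ω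
      = ∑ p : Ω₀, (if rec p v₀ ∈ D then M p else 0) *
          noiseProb Xs θ ν (fun j y w => f j zlast y (γlast j y) w) znext x₀ := by
    have h0 : ∑ ω ∈ D ∩ C, mass ω
        = ∑ ω, if ω ∈ D ∩ C then mass ω else 0 := by
      rw [Finset.sum_ite_mem, Finset.univ_inter]
    rw [h0, hsum (fun ω => if ω ∈ D ∩ C then mass ω else 0)]
    refine Finset.sum_congr rfl fun p _ => ?_
    by_cases hpd : rec p v₀ ∈ D
    · obtain ⟨hz, hγ⟩ := hP _ ((hD _).mp hpd)
      have hz' : empT Xs θ (xp p) = zlast := hz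
      have hCiff : ∀ v : Fin n → W, (rec p v ∈ C ↔
          empT Xs θ (fun i => f (θ i) zlast (xp p i) (γlast (θ i) (xp p i)) (v i)) = znext) := by
        intro v
        rw [hC, hnext p v, hz', hγ]
      calc ∑ v : Fin n → W, (if rec p v ∈ D ∩ C then mass (rec p v) else 0)
          = ∑ v : Fin n → W,
            (if empT Xs θ (fun i => f (θ i) zlast (xp p i) (γlast (θ i) (xp p i)) (v i)) = znext
              then M p * ∏ i, ν (θ i) (v i) else 0) := by
            refine Finset.sum_congr rfl fun v _ => ?_
            by_cases hc : empT Xs θ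
                (fun i => f (θ i) zlast (xp p i) (γlast (θ i) (xp p i)) (v i)) = znext
            · rw [if_pos hc, if_pos (Finset.mem_inter.mpr
                ⟨(hmem p v).mpr hpd, (hCiff v).mpr hc⟩), hmassfac]
            · rw [if_neg hc, if_neg
                (fun hm => hc ((hCiff v).mp (Finset.mem_inter.mp hm).2))]
        _ = M p * noiseProb Xs θ ν (fun j y w => f j zlast y (γlast j y) w) znext (xp p) := by
            simp only [noiseProb]
            rw [Finset.mul_sum]
            refine Finset.sum_congr rfl fun v _ => ?_
            split <;> simp
        _ = (if rec p v₀ ∈ D then M p else 0) *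
              noiseProb Xs θ ν (fun j y w => f j zlast y (γlast j y) w) znext x₀ := by
            rw [if_pos hpd]
            simp only [noiseProb]
            rw [noise_exchange hn Xs θ ν (fun j y w => f j zlast y (γlast j y) w) znext
                (x := xp p) (x' := x₀) (by rw [hz', hx₀])]
    · rw [if_neg hpd, zero_mul]
      refine Finset.sum_eq_zero fun v _ => ?_
      rw [if_neg]
      rw [Finset.mem_inter]
      intro hcon
      exact hpd ((hmem p v).mp hcon.1)
  have hDonly : ∑ ω ∈ D, mass ω = ∑ p : Ω₀, (if rec p v₀ ∈ D then M p else 0) := by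
    have h0 : ∑ ω ∈ D, mass ω = ∑ ω, if ω ∈ D then mass ω else 0 := by
      rw [Finset.sum_ite_mem, Finset.univ_inter]
    rw [h0, hsum (fun ω => if ω ∈ D then mass ω else 0)]
    refine Finset.sum_congr rfl fun p _ => ?_
    by_cases hpd : rec p v₀ ∈ D
    · rw [if_pos hpd]
      calc ∑ v : Fin n → W, (if rec p v ∈ D then mass (rec p v) else 0)
          = ∑ v : Fin n → W, M p * ∏ i, ν (θ i) (v i) := by
            refine Finset.sum_congr rfl fun v _ => ?_
            rw [if_pos ((hmem p v).mpr hpd), hmassfac]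
        _ = M p := by
            rw [← Finset.mul_sum, ← Fintype.prod_sum (fun i w => ν (θ i) w)]
            simp [hν]
    · rw [if_neg hpd]
      refine Finset.sum_eq_zero fun v _ => ?_
      rw [if_neg fun hcon => hpd ((hmem p v).mp hcon)]
  rw [hDC, hDonly, Finset.sum_mul]


/-- In the typed mean-field model, with noises independent across subsystems whose law
depends only on the type, and all subsystems of the same type using the identical
prescription, the typed mean field `Z_t` is a controlled Markov process with control
`γ̃_t = (γ_t(1),…,γ_t(k))`:
`P(Z_{t+1} = z | Z_{0:t} = z_{0:t}, γ̃_{0:t}) = P(Z_{t+1} = z | Z_t = z_t, γ̃_t)`.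
Probabilities of events are sums of the product-form masses; conditional probabilities
are ratios. -/
theorem typed_mean_field_is_controlled_markov {n T : ℕ} (hn : 1 ≤ n)
    (Xs Us : Fin k → Type*)
    [∀ j, Fintype (Xs j)] [∀ j, DecidableEq (Xs j)]
    [∀ j, Fintype (Us j)] [∀ j, DecidableEq (Us j)]
    [Fintype W] [DecidableEq W] [Inhabited W]
    (θ : Fin n → Fin k)
    (f : (j : Fin k) → (((j : Fin k) × Xs j) → ℝ) → Xs j → Us j → W → Xs j)
    (ψ : (t : ℕ) → (Fin (t + 1) → (((j : Fin k) × Xs j) → ℝ)) →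
      ((j : Fin k) → Xs j → Us j))
    (ρ : (j : Fin k) → Xs j → ℝ≥0∞) (ν : Fin k → W → ℝ≥0∞)
    (hρ : ∀ j, ∑ x : Xs j, ρ j x = 1) (hν : ∀ j, ∑ w : W, ν j w = 1)
    (mass : (((i : Fin n) → Xs (θ i)) × (Fin T → Fin n → W)) → ℝ≥0∞)
    (hmass : ∀ ω, mass ω =
      (∏ i, ρ (θ i) (ω.1 i)) * ∏ t, ∏ i, ν (θ i) (ω.2 t i))
    (t : ℕ) (ht : t < T)
    (zs : Fin (t + 1) → (((j : Fin k) × Xs j) → ℝ))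
    (γs : Fin (t + 1) → ((j : Fin k) → Xs j → Us j))
    (znext : ((j : Fin k) × Xs j) → ℝ)
    (A B C : Finset (((i : Fin n) → Xs (θ i)) × (Fin T → Fin n → W)))
    (hA : ∀ ω, ω ∈ A ↔
      (∀ s : Fin (t + 1), empT Xs θ (tState Xs Us θ f ψ ω (s : ℕ)) = zs s) ∧
      (∀ s : Fin (t + 1),
        ψ (s : ℕ) (fun r : Fin ((s : ℕ) + 1) => empT Xs θ (tState Xs Us θ f ψ ω (r : ℕ)))
          = γs s))
    (hB : ∀ ω, ω ∈ B ↔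
      empT Xs θ (tState Xs Us θ f ψ ω t) = zs (Fin.last t) ∧
      ψ t (fun r : Fin (t + 1) => empT Xs θ (tState Xs Us θ f ψ ω (r : ℕ)))
        = γs (Fin.last t))
    (hC : ∀ ω, ω ∈ C ↔ empT Xs θ (tState Xs Us θ f ψ ω (t + 1)) = znext)
    (hApos : ∑ ω ∈ A, mass ω ≠ 0) (hBpos : ∑ ω ∈ B, mass ω ≠ 0) :
    (∑ ω ∈ A ∩ C, mass ω) / (∑ ω ∈ A, mass ω) =
      (∑ ω ∈ B ∩ C, mass ω) / (∑ ω ∈ B, mass ω) := by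
  classical
  -- A is nonempty; pick a reference profile
  have hAne : A.Nonempty := by
    rw [Finset.nonempty_iff_ne_empty]
    rintro rfl
    simp at hApos
  obtain ⟨ω₀, hω₀⟩ := hAne
  obtain ⟨hz₀, hγ₀⟩ := (hA ω₀).mp hω₀
  set x₀ : (i : Fin n) → Xs (θ i) := tState Xs Us θ f ψ ω₀ t with hx₀def
  have hx₀ : empT Xs θ x₀ = zs (Fin.last t) := hz₀ (Fin.last t)
  set F : ℝ≥0∞ := noiseProb Xs θ ν
    (fun j y w => f j (zs (Fin.last t)) y (γs (Fin.last t) j y) w) znext x₀ with hF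
  -- apply the factorization lemma to A
  have hKA : ∑ ω ∈ A ∩ C, mass ω = (∑ ω ∈ A, mass ω) * F := by
    refine key_factor hn Xs Us θ f ψ ρ ν hν mass hmass t ht
      (zs (Fin.last t)) (γs (Fin.last t)) znext
      (fun h => (∀ s : Fin (t + 1), h s = zs s) ∧
        (∀ s : Fin (t + 1), ψ (s : ℕ)
          (fun r : Fin ((s : ℕ) + 1) => h ⟨(r : ℕ), by
            have := r.isLt; have := s.isLt; omega⟩) = γs s))
      A C (fun ω => hA ω) ?_ hC x₀ hx₀
    intro h hh
    refine ⟨hh.1 (Fin.last t), ?_⟩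
    have he : (fun r : Fin (t + 1) => h ⟨(r : ℕ), by have := r.isLt; omega⟩) = h :=
      funext fun r => congrArg h (by ext; rfl)
    have h2 : ψ t (fun r : Fin (t + 1) => h ⟨(r : ℕ), by have := r.isLt; omega⟩)
        = γs (Fin.last t) := hh.2 (Fin.last t)
    rwa [he] at h2
  -- apply the factorization lemma to B
  have hKB : ∑ ω ∈ B ∩ C, mass ω = (∑ ω ∈ B, mass ω) * F := by
    refine key_factor hn Xs Us θ f ψ ρ ν hν mass hmass t ht
      (zs (Fin.last t)) (γs (Fin.last t)) znext
      (fun h => h (Fin.last t) = zs (Fin.last t) ∧ ψ t h = γs (Fin.last t))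
      B C (fun ω => hB ω) (fun h hh => hh) hC x₀ hx₀
  -- finiteness of the masses
  have hmass_le : ∀ ω, mass ω ≤ 1 := by
    intro ω
    rw [hmass]
    have hρ1 : ∀ j x, ρ j x ≤ 1 := fun j x =>
      (hρ j) ▸ Finset.single_le_sum (f := ρ j) (fun _ _ => zero_le) (Finset.mem_univ x)
    have hν1 : ∀ j w, ν j w ≤ 1 := fun j w =>
      (hν j) ▸ Finset.single_le_sum (f := ν j) (fun _ _ => zero_le) (Finset.mem_univ w)
    refine mul_le_one' (Finset.prod_le_one (fun _ _ => zero_le) fun i _ => hρ1 _ _) ?_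
    exact Finset.prod_le_one (fun _ _ => zero_le) fun s _ =>
      Finset.prod_le_one (fun _ _ => zero_le) fun i _ => hν1 _ _
  have hsum_ne_top : ∀ s : Finset (((i : Fin n) → Xs (θ i)) × (Fin T → Fin n → W)),
      ∑ ω ∈ s, mass ω ≠ ⊤ := by
    intro s
    refine ne_top_of_le_ne_top (b := (s.card : ℝ≥0∞) * 1) ?_ ?_
    · exact ENNReal.mul_ne_top (ENNReal.natCast_ne_top _) ENNReal.one_ne_top
    · calc ∑ ω ∈ s, mass ω ≤ ∑ _ω ∈ s, (1 : ℝ≥0∞) :=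
            Finset.sum_le_sum fun ω _ => hmass_le ω
        _ = (s.card : ℝ≥0∞) * 1 := by simp
  have hdiv : ∀ S : ℝ≥0∞, S ≠ 0 → S ≠ ⊤ → (S * F) / S = F := by
    intro S h0 htop
    rw [mul_comm, div_eq_mul_inv, mul_assoc, ENNReal.mul_inv_cancel h0 htop, mul_one]
  rw [hKA, hKB, hdiv _ hApos (hsum_ne_top A), hdiv _ hBpos (hsum_ne_top B)]
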